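/- (Sverdrup-Thygeson) Let (K,d) be a nonempty compact metric space and ν a Borel probability measure on K such that E_d(ν) consists of a single point c. Let (T_n)_{n≥1} be a sequence of independent, identically distributed K-valued random variables with law ν, and for each n let g_n(y) = (1/n) Σ_{i=1}^n d(T_i,y). Then almost surely, sup_{a ∈ argmin g_n} d(a, c) → 0 as n → ∞. -/

import Mathlib

open MeasureTheory Filter Finset Topology

theorem sverdrup_thygeson_lln {K : Type*} [MetricSpace K] [CompactSpace K] [Nonempty K]
    [MeasurableSpace K] [BorelSpace K]
    (ν : Measure K) [IsProbabilityMeasure ν] (c : K)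
    (hc : {y : K | ∀ y' : K, (∫ x, dist y x ∂ν) ≤ ∫ x, dist y' x ∂ν} = {c})
    {Ω : Type*} [MeasurableSpace Ω] (P : Measure Ω) [IsProbabilityMeasure P]
    (T : ℕ → Ω → K) (hTmeas : ∀ i, Measurable (T i))
    (hTindep : ProbabilityTheory.iIndepFun T P)
    (hTlaw : ∀ i, P.map (T i) = ν) :
    ∀ᵐ ω ∂P, Filter.Tendsto
      (fun n : ℕ => sSup ((fun a => dist a c) ''
        {y : K | ∀ y' : K,
          (1 / (n : ℝ)) * ∑ i ∈ Finset.range n, dist (T i ω) y ≤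
          (1 / (n : ℝ)) * ∑ i ∈ Finset.range n, dist (T i ω) y'}))
      Filter.atTop (nhds 0) := by
  classical
  set g : K → ℝ := fun y => ∫ x, dist y x ∂ν with hgdef
  -- integrability of distance functions
  have hint : ∀ y : K, Integrable (fun x => dist y x) ν := by
    intro y
    obtain ⟨C, hC⟩ := Metric.isBounded_iff.1 (isCompact_univ (X := K)).isBounded
    refine ⟨(Continuous.dist continuous_const continuous_id).aestronglyMeasurable, ?_⟩
    exact HasFiniteIntegral.of_bounded (C := C)
      (ae_of_all _ fun x => by
        simpa [Real.norm_eq_abs, abs_of_nonneg dist_nonneg] using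
          hC (Set.mem_univ y) (Set.mem_univ x))
  -- g satisfies a Lipschitz estimate
  have hglip : ∀ y y' : K, g y ≤ g y' + dist y y' := by
    intro y y'
    have h1 : ∀ x : K, dist y x ≤ dist y' x + dist y y' := fun x => by
      have h := dist_triangle y y' x
      linarith
    calc g y ≤ ∫ x, (dist y' x + dist y y') ∂ν :=
          integral_mono (hint y) ((hint y').add (integrable_const _)) h1
      _ = g y' + dist y y' := by
          rw [integral_add (hint y') (integrable_const _), integral_const]
          simp
          rfl
  have hgcont : Continuous g := by
    rw [Metric.continuous_iff]
    intro y ε hε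
    refine ⟨ε, hε, fun y' hy' => ?_⟩
    rw [Real.dist_eq, abs_sub_lt_iff]
    constructor
    · have h := hglip y' y; linarith
    · have h := hglip y y'; rw [dist_comm y y'] at h; linarith
  -- minimality facts about c
  have hmem : ∀ z : K, (∀ y' : K, g z ≤ g y') ↔ z = c := by
    intro z
    constructor
    · intro h; exact (Set.ext_iff.1 hc z).1 h
    · rintro rfl; exact (Set.ext_iff.1 hc z).2 rfl
  have hmin : ∀ y : K, g c ≤ g y := (hmem c).2 rfl
  have huniq : ∀ y : K, y ≠ c → g c < g y := by
    intro y hy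
    rcases lt_or_eq_of_le (hmin y) with h | h
    · exact h
    · exact absurd ((hmem y).1 fun y' => h ▸ hmin y') hy
  -- strong law at each point
  have hslln : ∀ y : K, ∀ᵐ ω ∂P,
      Tendsto (fun n : ℕ => (∑ i ∈ Finset.range n, dist (T i ω) y) / n) atTop (𝓝 (g y)) := by
    intro y
    have hmd : Measurable (fun x : K => dist x y) :=
      (Continuous.dist continuous_id continuous_const).measurable
    have hint' : Integrable (fun ω => dist (T 0 ω) y) P := by
      have h : Integrable (fun x : K => dist x y) ν := by
        simpa [dist_comm] using hint y
      rw [← hTlaw 0] at h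
      exact h.comp_measurable (hTmeas 0)
    have hindep : Pairwise (Function.onFun (ProbabilityTheory.IndepFun · · P)
        fun i ω => dist (T i ω) y) := by
      intro i j hij
      exact (hTindep.indepFun hij).comp hmd hmd
    have hident : ∀ i, ProbabilityTheory.IdentDistrib (fun ω => dist (T i ω) y)
        (fun ω => dist (T 0 ω) y) P P := by
      intro i
      have hTid : ProbabilityTheory.IdentDistrib (T i) (T 0) P P :=
        ⟨(hTmeas i).aemeasurable, (hTmeas 0).aemeasurable, by rw [hTlaw i, hTlaw 0]⟩
      exact hTid.comp hmd
    have h := ProbabilityTheory.strong_law_ae_real _ hint' hindep hident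
    have hEeq : (∫ ω, dist (T 0 ω) y ∂P) = g y := by
      have hgy : g y = ∫ x, dist x y ∂(P.map (T 0)) := by
        rw [hTlaw 0]; simp [hgdef, dist_comm]
      rw [hgy, integral_map (hTmeas 0).aemeasurable hmd.aestronglyMeasurable]
    rw [hEeq] at h
    exact h
  obtain ⟨s, hs_count, hs_dense⟩ := TopologicalSpace.exists_countable_dense K
  have hgood : ∀ᵐ ω ∂P, ∀ y ∈ s,
      Tendsto (fun n : ℕ => (∑ i ∈ Finset.range n, dist (T i ω) y) / n) atTop (𝓝 (g y)) :=
    (ae_ball_iff hs_count).2 fun y _ => hslln y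
  filter_upwards [hgood] with ω hω
  set h : ℕ → K → ℝ := fun n y => (1 / (n : ℝ)) * ∑ i ∈ Finset.range n, dist (T i ω) y
    with hhdef
  show Tendsto (fun n : ℕ => sSup ((fun a => dist a c) ''
      {y : K | ∀ y' : K, h n y ≤ h n y'})) atTop (𝓝 0)
  have hhlip : ∀ n y y', h n y ≤ h n y' + dist y y' := by
    intro n y y'
    rcases Nat.eq_zero_or_pos n with rfl | hn
    · simp [hhdef, dist_nonneg]
    have hsum : (∑ i ∈ Finset.range n, dist (T i ω) y) ≤
        (∑ i ∈ Finset.range n, dist (T i ω) y') + n * dist y y' := by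
      calc (∑ i ∈ Finset.range n, dist (T i ω) y)
          ≤ ∑ i ∈ Finset.range n, (dist (T i ω) y' + dist y' y) :=
            Finset.sum_le_sum fun i _ => dist_triangle _ _ _
        _ = (∑ i ∈ Finset.range n, dist (T i ω) y') + n * dist y y' := by
            rw [Finset.sum_add_distrib]
            simp [dist_comm y' y]
    have hn' : (0:ℝ) < n := by exact_mod_cast hn
    have h2 : (1 / (n:ℝ)) * (∑ i ∈ Finset.range n, dist (T i ω) y) ≤
        (1 / (n:ℝ)) * ((∑ i ∈ Finset.range n, dist (T i ω) y') + n * dist y y') :=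
      mul_le_mul_of_nonneg_left hsum (by positivity)
    calc h n y ≤ (1 / (n:ℝ)) * ((∑ i ∈ Finset.range n, dist (T i ω) y') + n * dist y y') :=
          h2
      _ = h n y' + dist y y' := by
          simp only [hhdef]
          field_simp
  have hhcont : ∀ n, Continuous (h n) :=
    fun n => continuous_const.mul
      (continuous_finset_sum _ fun i _ => Continuous.dist continuous_const continuous_id)
  -- uniform convergence
  have hunif : ∀ η : ℝ, 0 < η → ∀ᶠ n in atTop, ∀ y : K, |h n y - g y| < η := by
    intro η hη
    have h3 : (0:ℝ) < η / 3 := by linarith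
    have hcover : (Set.univ : Set K) ⊆ ⋃ y : s, Metric.ball (y : K) (η / 3) := by
      intro x _
      obtain ⟨y, hy⟩ := Metric.dense_iff.1 hs_dense x (η/3) h3
      exact Set.mem_iUnion.2 ⟨⟨y, hy.2⟩, by
        simpa [Metric.mem_ball, dist_comm] using hy.1⟩
    obtain ⟨F, hF⟩ := isCompact_univ.elim_finite_subcover
      (fun y : s => Metric.ball (y : K) (η / 3)) (fun _ => Metric.isOpen_ball) hcover
    have hev : ∀ᶠ n in atTop, ∀ f ∈ F, |h n (f : K) - g f| < η / 3 := by
      rw [eventually_all_finset]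
      intro f _
      have ht := hω (f : K) f.2
      have ht2 := Metric.tendsto_nhds.mp ht (η/3) h3
      filter_upwards [ht2] with n hn
      rw [Real.dist_eq] at hn
      have : h n (f : K) = (∑ i ∈ Finset.range n, dist (T i ω) f) / n := by
        simp [hhdef, div_eq_mul_inv, mul_comm]
      rw [this]
      exact hn
    filter_upwards [hev] with n hn y
    obtain ⟨f, hfF, hyf⟩ : ∃ f ∈ F, y ∈ Metric.ball (f : K) (η / 3) := by
      have hy := hF (Set.mem_univ y)
      simpa using Set.mem_iUnion₂.1 hy
    rw [Metric.mem_ball] at hyf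
    have d1 : |h n y - h n f| ≤ dist y f := by
      rw [abs_sub_le_iff]
      constructor
      · have := hhlip n y f; linarith
      · have := hhlip n f y; rw [dist_comm (f:K) y] at this; linarith
    have d2 : |g (f : K) - g y| ≤ dist y f := by
      rw [abs_sub_le_iff]
      constructor
      · have := hglip (f : K) y; rw [dist_comm (f:K) y] at this; linarith
      · have := hglip y (f : K); linarith
    have d3 : |h n (f : K) - g f| < η / 3 := hn f hfF
    calc |h n y - g y| ≤ |h n y - h n f| + |h n (f:K) - g f| + |g (f:K) - g y| := by
          have := abs_sub_le (h n y) (h n (f:K)) (g y)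
          have h2 := abs_sub_le (h n (f:K)) (g (f:K)) (g y)
          linarith
      _ < η := by linarith
  -- conclusion
  rw [Metric.tendsto_atTop]
  intro ε hε
  have key : ∃ N, ∀ n ≥ N, ∀ y : K, (∀ y', h n y ≤ h n y') → dist y c ≤ ε / 2 := by
    by_cases hS : ∃ z : K, ε / 2 ≤ dist z c
    · have hScl : IsClosed {z : K | ε / 2 ≤ dist z c} :=
        isClosed_le continuous_const (Continuous.dist continuous_id continuous_const)
      have hScomp : IsCompact {z : K | ε / 2 ≤ dist z c} := hScl.isCompact
      obtain ⟨z, hzS, hz⟩ := hScomp.exists_isMinOn ⟨hS.choose, hS.choose_spec⟩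
        hgcont.continuousOn
      have hzc : z ≠ c := by
        intro hzc
        rw [hzc] at hzS
        simp only [Set.mem_setOf_eq, dist_self] at hzS
        linarith
      have hgz : g c < g z := huniq z hzc
      set δ := (g z - g c) / 3 with hδdef
      have hδ : 0 < δ := by rw [hδdef]; linarith
      obtain ⟨N, hN⟩ := eventually_atTop.1 (hunif δ hδ)
      refine ⟨N, fun n hn y hy => ?_⟩
      by_contra hcon
      push_neg at hcon
      have hyS : y ∈ {z : K | ε / 2 ≤ dist z c} := le_of_lt hcon
      have h1 : h n y ≤ h n c := hy c
      have h2 : |h n y - g y| < δ := hN n hn y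
      have h3 : |h n c - g c| < δ := hN n hn c
      have h4 : g z ≤ g y := isMinOn_iff.1 hz y hyS
      rw [abs_sub_lt_iff] at h2 h3
      have := h2.2
      have := h3.1
      rw [hδdef] at *
      linarith
    · push_neg at hS
      exact ⟨0, fun n _ y _ => le_of_lt (hS y)⟩
  obtain ⟨N, hN⟩ := key
  refine ⟨N, fun n hn => ?_⟩
  have hAne : {y : K | ∀ y', h n y ≤ h n y'}.Nonempty := by
    obtain ⟨y0, _, hy0⟩ := isCompact_univ.exists_isMinOn Set.univ_nonempty
      (hhcont n).continuousOn
    exact ⟨y0, fun y' => isMinOn_iff.1 hy0 y' (Set.mem_univ y')⟩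
  have hbdd : BddAbove ((fun a => dist a c) '' {y : K | ∀ y', h n y ≤ h n y'}) := by
    have hcpt : IsCompact ((fun a : K => dist a c) '' Set.univ) :=
      isCompact_univ.image (Continuous.dist continuous_id continuous_const)
    exact hcpt.bddAbove.mono (Set.image_mono (Set.subset_univ _))
  have hsup_le : sSup ((fun a => dist a c) '' {y : K | ∀ y', h n y ≤ h n y'}) ≤ ε / 2 := by
    apply Real.sSup_le
    · rintro x ⟨y, hyA, rfl⟩
      exact hN n hn y hyA
    · linarith
  have hsup_nonneg : 0 ≤ sSup ((fun a => dist a c) '' {y : K | ∀ y', h n y ≤ h n y'}) := by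
    obtain ⟨y0, hy0⟩ := hAne
    exact le_trans dist_nonneg (le_csSup hbdd ⟨y0, hy0, rfl⟩)
  rw [Real.dist_eq, sub_zero, abs_of_nonneg hsup_nonneg]
  linarith
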